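/- Assume in addition that the σ-algebra generated by ⋃_{n≥1} 𝒜_n equals 𝒜 up to μ-null sets. Then for every f ∈ L²(Ω), ‖T^t(f) − f‖_{L²(Ω)} → 0 as t → 0⁺, where T^t(f) = Σ_{n≥1} (1 − a_{n−1})^t dE_n(f). -/

import Mathlib

open MeasureTheory Filter Set Topology ENNReal

/-- `E_n(f)`: conditional expectation of `f` given `𝒜_n` for `n ≥ 1`, with `E_0 = 0`. -/
noncomputable def condE {Ω : Type*} [m0 : MeasurableSpace Ω] (μ : Measure Ω)
    (F : ℕ → MeasurableSpace Ω) (f : Ω → ℝ) (n : ℕ) : Ω → ℝ :=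
  if n = 0 then 0 else μ[f | F n]

/-- The martingale difference `dE_n(f) = E_n(f) - E_{n-1}(f)`. -/
noncomputable def dE {Ω : Type*} [m0 : MeasurableSpace Ω] (μ : Measure Ω)
    (F : ℕ → MeasurableSpace Ω) (f : Ω → ℝ) (n : ℕ) : Ω → ℝ :=
  fun ω => condE μ F f n ω - condE μ F f (n - 1) ω

/-- `IsTt μ F a t p f Tf` says that `Tf` is the sum of the series
`T^t(f) = Σ_{n≥1} (1 - a_{n-1})^t dE_n(f)`, the series converging in `L_p(Ω)`. -/
def IsTt {Ω : Type*} [m0 : MeasurableSpace Ω] (μ : Measure Ω)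
    (F : ℕ → MeasurableSpace Ω) (a : ℕ → ℝ) (t : ℝ) (p : ℝ≥0∞)
    (f Tf : Ω → ℝ) : Prop :=
  Tendsto (fun N : ℕ => eLpNorm
      (fun ω => (∑ n ∈ Finset.range N, (1 - a n) ^ t * dE μ F f (n + 1) ω) - Tf ω)
      p μ) atTop (𝓝 0)


local notation "⟪" x ", " y "⟫" => @inner ℝ _ _ x y

lemma aux_parseval {E : Type*} [NormedAddCommGroup E] [InnerProductSpace ℝ E]
    (D : ℕ → E) (hD : ∀ i j, i ≠ j → ⟪D i, D j⟫ = 0) (b : ℕ → ℝ) (hb : ∀ i, |b i| ≤ 1)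
    (s : Finset ℕ) : ‖∑ i ∈ s, b i • D i‖ ≤ ‖∑ i ∈ s, D i‖ := by
  have key : ∀ c : ℕ → ℝ, ⟪∑ i ∈ s, c i • D i, ∑ j ∈ s, c j • D j⟫
      = ∑ i ∈ s, (c i)^2 * ⟪D i, D i⟫ := by
    intro c
    rw [sum_inner]
    refine Finset.sum_congr rfl fun i hi => ?_
    rw [inner_sum]
    rw [Finset.sum_eq_single i]
    · rw [real_inner_smul_left, real_inner_smul_right]; ring
    · intro j hj hji
      rw [real_inner_smul_left, real_inner_smul_right, hD i j (Ne.symm hji), mul_zero, mul_zero]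
    · intro h; exact absurd hi h
  have h1 : ‖∑ i ∈ s, b i • D i‖^2 ≤ ‖∑ i ∈ s, D i‖^2 := by
    rw [← real_inner_self_eq_norm_sq, ← real_inner_self_eq_norm_sq]
    have h2 := key b
    have h3 : ⟪∑ i ∈ s, D i, ∑ j ∈ s, D j⟫ = ∑ i ∈ s, (1:ℝ)^2 * ⟪D i, D i⟫ := by
      simpa using key 1
    rw [h2, h3]
    refine Finset.sum_le_sum fun i _ => ?_
    have : (b i)^2 ≤ 1 := by
      have := hb i
      nlinarith [abs_nonneg (b i), sq_abs (b i)]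
    nlinarith [real_inner_self_nonneg (x := D i)]
  exact (pow_le_pow_iff_left₀ (norm_nonneg _) (norm_nonneg _) two_ne_zero).mp h1

lemma aux_condexpL2_ae_eq {Ω : Type*} [m0 : MeasurableSpace Ω] {μ : Measure Ω}
    [IsProbabilityMeasure μ] {m : MeasurableSpace Ω} (hm : m ≤ m0) (g : Lp ℝ 2 μ) :
    (condExpL2 ℝ ℝ hm g : Ω → ℝ) =ᵐ[μ] μ[g | m] := by
  haveI : SigmaFinite (μ.trim hm) := by
    haveI : IsFiniteMeasure (μ.trim hm) := isFiniteMeasure_trim hm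
    infer_instance
  refine ae_eq_condExp_of_forall_setIntegral_eq hm ?_ ?_ ?_ ?_
  · exact (Lp.memLp g).integrable one_le_two
  · exact fun s hs hμs => integrableOn_condExpL2_of_measure_ne_top hm hμs.ne g
  · exact fun s hs hμs => integral_condExpL2_eq_of_fin_meas_real g hs hμs.ne
  · exact aestronglyMeasurable_condExpL2 hm g

lemma aux_dense {Ω : Type*} [m0 : MeasurableSpace Ω] (μ : Measure Ω) [IsProbabilityMeasure μ]
    (F : ℕ → MeasurableSpace Ω) (hle : ∀ n, F n ≤ m0) (hmono : Monotone F)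
    (hgen : ∀ s : Set Ω, MeasurableSet[m0] s →
      ∃ u : Set Ω, MeasurableSet[⨆ n, F (n + 1)] u ∧ μ (symmDiff s u) = 0) :
    (⨆ n, lpMeas ℝ ℝ (F (n + 1)) 2 μ).topologicalClosure = ⊤ := by
  set C : Submodule ℝ (Lp ℝ 2 μ) := (⨆ n, lpMeas ℝ ℝ (F (n + 1)) 2 μ).topologicalClosure with hC
  have hmSle : (⨆ n, F (n + 1)) ≤ m0 := iSup_le fun n => hle (n + 1)
  have hCclosed : IsClosed (C : Set (Lp ℝ 2 μ)) := Submodule.isClosed_topologicalClosure _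
  have hVle : ∀ n, lpMeas ℝ ℝ (F (n + 1)) 2 μ ≤ C := fun n =>
    (le_iSup (fun n => lpMeas ℝ ℝ (F (n + 1)) 2 μ) n).trans
      (Submodule.le_topologicalClosure _)
  -- indicators of m∞-measurable sets
  have key : ∀ (c : ℝ) (u : Set Ω), MeasurableSet[⨆ n, F (n + 1)] u →
      ∀ (hu : MeasurableSet[m0] u), indicatorConstLp 2 hu (measure_ne_top μ u) c ∈ C := by
    intro c
    have h_eq : (⨆ n, F (n + 1)) =
        MeasurableSpace.generateFrom { s | ∃ n, MeasurableSet[F (n + 1)] s } :=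
      MeasurableSpace.measurableSpace_iSup_eq _
    have h_inter : IsPiSystem { s : Set Ω | ∃ n, MeasurableSet[F (n + 1)] s } := by
      rintro s ⟨n, hs⟩ t ⟨m, ht⟩ -
      exact ⟨max n m, ((hmono (by omega : n + 1 ≤ max n m + 1)) s hs).inter
        ((hmono (by omega : m + 1 ≤ max n m + 1)) t ht)⟩
    refine MeasurableSpace.induction_on_inter
      (C := fun u _ => ∀ hu : MeasurableSet[m0] u, indicatorConstLp 2 hu (measure_ne_top μ u) c ∈ C)
      h_eq h_inter ?_ ?_ ?_ ?_
    · -- empty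
      intro hu
      have : indicatorConstLp 2 hu (measure_ne_top μ (∅ : Set Ω)) c = 0 := by
        refine Lp.ext (indicatorConstLp_coeFn.trans ?_)
        rw [Set.indicator_empty]
        exact (Lp.coeFn_zero ℝ 2 μ).symm
      rw [this]; exact zero_mem C
    · -- basic
      rintro t ⟨n, ht⟩ hu
      refine hVle n ?_
      rw [mem_lpMeas_iff_aestronglyMeasurable]
      exact ⟨t.indicator fun _ => c,
        (@stronglyMeasurable_const Ω ℝ (F (n + 1)) _ c).indicator ht, indicatorConstLp_coeFn⟩
    · -- compl
      intro t htmeas iht hu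
      have htm0 : MeasurableSet[m0] t := hmSle t htmeas
      have hkC : (memLp_const (μ := μ) (p := 2) c).toLp (fun _ => c) ∈ C := by
        refine hVle 0 ?_
        rw [mem_lpMeas_iff_aestronglyMeasurable]
        exact ⟨fun _ => c, @stronglyMeasurable_const Ω ℝ (F 1) _ c,
          (memLp_const c).coeFn_toLp⟩
      have : indicatorConstLp 2 hu (measure_ne_top μ tᶜ) c =
          (memLp_const (μ := μ) (p := 2) c).toLp (fun _ => c)
            - indicatorConstLp 2 htm0 (measure_ne_top μ t) c := by
        refine Lp.ext (indicatorConstLp_coeFn.trans ?_)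
        filter_upwards [Lp.coeFn_sub ((memLp_const (μ := μ) (p := 2) c).toLp fun _ => c)
            (indicatorConstLp 2 htm0 (measure_ne_top μ t) c),
          (memLp_const (μ := μ) (p := 2) c).coeFn_toLp,
          indicatorConstLp_coeFn (p := 2) (hs := htm0) (hμs := measure_ne_top μ t) (c := c)]
          with x h1 h2 h3
        rw [h1, Pi.sub_apply, h2, h3]
        classical
        rw [Set.indicator_apply, Set.indicator_apply]
        by_cases hx : x ∈ t <;> simp [hx]
      rw [this]
      exact sub_mem hkC (iht htm0)
    · -- disjoint unions
      intro g hdisj hgmeas ihg hu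
      set U : ℕ → Set Ω := fun k => ⋃ i ∈ Finset.range k, g i with hU
      have hUm0 : ∀ k, MeasurableSet[m0] (U k) := fun k =>
        Finset.measurableSet_biUnion _ (fun i _ => hmSle _ (hgmeas i))
      have hWU : ∀ k, indicatorConstLp 2 (hUm0 k) (measure_ne_top μ (U k)) c ∈ C := by
        intro k
        induction k with
        | zero =>
            have : indicatorConstLp 2 (hUm0 0) (measure_ne_top μ (U 0)) c = 0 := by
              refine Lp.ext (indicatorConstLp_coeFn.trans ?_)
              have : U 0 = ∅ := by simp [hU]
              rw [this, Set.indicator_empty]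
              exact (Lp.coeFn_zero ℝ 2 μ).symm
            rw [this]; exact zero_mem C
        | succ k ih =>
            have hUsucc : U (k + 1) = U k ∪ g k := by
              simp only [hU, Finset.range_add_one, Finset.set_biUnion_insert]
              exact Set.union_comm _ _
            have hdisj' : Disjoint (U k) (g k) := by
              refine Set.disjoint_iUnion₂_left.mpr fun i hi => ?_
              exact hdisj (by simp at hi; omega)
            have : indicatorConstLp 2 (hUm0 (k + 1)) (measure_ne_top μ (U (k + 1))) c =
                indicatorConstLp 2 (hUm0 k) (measure_ne_top μ (U k)) c
                  + indicatorConstLp 2 (hmSle _ (hgmeas k)) (measure_ne_top μ (g k)) c := by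
              rw [← indicatorConstLp_disjoint_union (hUm0 k) (hmSle _ (hgmeas k))
                (measure_ne_top μ _) (measure_ne_top μ _) hdisj' c]
              refine Lp.ext (indicatorConstLp_coeFn.trans ?_)
              rw [hUsucc]
              exact indicatorConstLp_coeFn.symm
            rw [this]
            exact add_mem ih (ihg k (hmSle _ (hgmeas k)))
      -- limit
      have htend : Tendsto
          (fun k => indicatorConstLp 2 (hUm0 k) (measure_ne_top μ (U k)) c)
          atTop (𝓝 (indicatorConstLp 2 hu (measure_ne_top μ (⋃ i, g i)) c)) := by
        rw [tendsto_iff_dist_tendsto_zero]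
        have hdist : ∀ k, dist (indicatorConstLp 2 (hUm0 k) (measure_ne_top μ (U k)) c)
            (indicatorConstLp 2 hu (measure_ne_top μ (⋃ i, g i)) c)
            = (‖c‖₊ * μ ((⋃ i, g i) \ U k) ^ (1 / (2:ℝ≥0∞).toReal)).toReal := by
          intro k
          rw [Lp.dist_def]
          congr 1
          have hae : (⇑(indicatorConstLp 2 (hUm0 k) (measure_ne_top μ (U k)) c)
              - ⇑(indicatorConstLp 2 hu (measure_ne_top μ (⋃ i, g i)) c))
              =ᵐ[μ] fun x => - (((⋃ i, g i) \ U k).indicator (fun _ => c) x) := by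
            filter_upwards [
              (indicatorConstLp_coeFn (p := 2) (hs := hUm0 k)
                (hμs := measure_ne_top μ (U k)) (c := c)),
              (indicatorConstLp_coeFn (p := 2) (hs := hu)
                (hμs := measure_ne_top μ (⋃ i, g i)) (c := c))] with x h2 h3
            rw [Pi.sub_apply, h2, h3]
            have hsub : U k ⊆ ⋃ i, g i := Set.iUnion₂_subset fun i _ => Set.subset_iUnion g i
            by_cases hx : x ∈ U k
            · simp [Set.indicator_apply, hx, hsub hx]
            · by_cases hx2 : x ∈ ⋃ i, g i <;> simp [Set.indicator_apply, hx, hx2]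
          rw [eLpNorm_congr_ae hae]
          have hneg : eLpNorm (fun x => - (((⋃ i, g i) \ U k).indicator (fun _ => c) x)) 2 μ
              = eLpNorm (((⋃ i, g i) \ U k).indicator (fun _ => c)) 2 μ := eLpNorm_neg _ _ _
          rw [hneg, eLpNorm_indicator_const (hu.diff (hUm0 k)) two_ne_zero ENNReal.ofNat_ne_top, enorm_eq_nnnorm]
        simp_rw [hdist]
        have hμtend : Tendsto (fun k => μ ((⋃ i, g i) \ U k)) atTop (𝓝 0) := by
          have h1 : Tendsto (fun k => μ ((⋃ i, g i) \ U k)) atTop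
              (𝓝 (μ (⋂ k, (⋃ i, g i) \ U k))) := by
            refine tendsto_measure_iInter_atTop
              (fun k => ((hu.diff (hUm0 k)).nullMeasurableSet)) ?_ ⟨0, measure_ne_top μ _⟩
            intro j k hjk
            refine Set.diff_subset_diff_right ?_
            exact Set.biUnion_subset_biUnion_left (Finset.range_subset_range.mpr hjk)
          have h2 : (⋂ k, (⋃ i, g i) \ U k) = ∅ := by
            ext x
            simp only [Set.mem_iInter, Set.mem_empty_iff_false, iff_false]
            intro h
            obtain ⟨hx, -⟩ := h 0
            obtain ⟨i, hi⟩ := Set.mem_iUnion.mp hx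
            exact (h (i + 1)).2
              (Set.mem_biUnion (Finset.mem_range.mpr (Nat.lt_succ_self i)) hi)
          rwa [h2, measure_empty] at h1
        have : Tendsto (fun k => (‖c‖₊ : ℝ≥0∞) * μ ((⋃ i, g i) \ U k) ^ (1 / (2:ℝ≥0∞).toReal))
            atTop (𝓝 0) := by
          have := ((ENNReal.continuous_rpow_const
            (y := 1 / (2:ℝ≥0∞).toReal)).tendsto 0).comp hμtend
          rw [ENNReal.zero_rpow_of_pos (by norm_num)] at this
          simpa using ENNReal.Tendsto.const_mul this (Or.inr ENNReal.coe_ne_top)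
        exact (ENNReal.tendsto_toReal (by simp)).comp this
      exact hCclosed.mem_of_tendsto htend (Filter.Eventually.of_forall fun k => hWU k)
  -- conclude
  rw [Submodule.eq_top_iff']
  refine fun x => Lp.induction (E := ℝ) (p := 2) ENNReal.ofNat_ne_top (fun y => y ∈ C) ?_ ?_ hCclosed x
  · intro c s hs hμs
    obtain ⟨u, humeas, hsymm⟩ := hgen s hs
    have hum0 : MeasurableSet[m0] u := hmSle u humeas
    have : (Lp.simpleFunc.indicatorConst 2 hs hμs.ne c : Lp ℝ 2 μ)
        = indicatorConstLp 2 hum0 (measure_ne_top μ u) c := by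
      rw [Lp.simpleFunc.coe_indicatorConst]
      refine Lp.ext (indicatorConstLp_coeFn.trans
        (EventuallyEq.trans ?_ indicatorConstLp_coeFn.symm))
      have : {x | ¬ s.indicator (fun _ => c) x = u.indicator (fun _ => c) x} ⊆ symmDiff s u := by
        intro x hx
        simp only [Set.mem_setOf_eq, Set.indicator_apply] at hx
        by_cases hxs : x ∈ s <;> by_cases hxu : x ∈ u
        · simp [hxs, hxu] at hx
        · exact Or.inl ⟨hxs, hxu⟩
        · exact Or.inr ⟨hxu, hxs⟩
        · simp [hxs, hxu] at hx
      exact measure_mono_null this hsymm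
    rw [this]
    exact key c u humeas hum0
  · intro f g hf hg hdisj hfC hgC
    exact add_mem hfC hgC

-- quadratic quasi-triangle in ℝ≥0∞
lemma aux_sq_add (p q : ℝ≥0∞) : (p + q) ^ 2 ≤ 4 * p ^ 2 + 4 * q ^ 2 := by
  rcases le_total p q with h | h
  · calc (p + q)^2 ≤ (q + q)^2 := by gcongr
    _ = 4 * q^2 := by ring
    _ ≤ 4 * p^2 + 4 * q^2 := le_add_self
  · calc (p + q)^2 ≤ (p + p)^2 := by gcongr
    _ = 4 * p^2 := by ring
    _ ≤ 4 * p^2 + 4 * q^2 := le_self_add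

lemma aux_J_eq {Ω : Type*} [m0 : MeasurableSpace Ω] {μ : Measure Ω} (u : Ω → ℝ) :
    ∫⁻ ω, (‖u ω‖₊ : ℝ≥0∞) ^ 2 ∂μ = (eLpNorm u 2 μ) ^ 2 := by
  rw [eLpNorm_eq_lintegral_rpow_enorm_toReal two_ne_zero ENNReal.ofNat_ne_top, ENNReal.toReal_ofNat]
  have h1 : ∀ x : ℝ≥0∞, x ^ (2:ℝ) = x ^ (2:ℕ) := fun x => by
    rw [← ENNReal.rpow_natCast x 2]; norm_num
  simp_rw [h1, enorm_eq_nnnorm]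
  rw [← ENNReal.rpow_natCast ((∫⁻ ω, (‖u ω‖₊:ℝ≥0∞)^(2:ℕ) ∂μ) ^ (1/2:ℝ)) 2,
    ← ENNReal.rpow_mul]
  norm_num

set_option maxHeartbeats 1000000 in
set_option synthInstance.maxHeartbeats 200000 in

set_option maxHeartbeats 1000000 in
set_option synthInstance.maxHeartbeats 200000 in
/-- If the σ-algebra generated by `⋃_{n≥1} 𝒜_n` equals `𝒜` up to `μ`-null sets, then for every
`f ∈ L²(Ω)` one has `‖T^t(f) - f‖₂ → 0` as `t → 0⁺`. -/
theorem stmt4 {Ω : Type*} [m0 : MeasurableSpace Ω] (μ : Measure Ω) [IsProbabilityMeasure μ]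
    (F : ℕ → MeasurableSpace Ω) (hle : ∀ n, F n ≤ m0) (hmono : Monotone F)
    (hgen : ∀ s : Set Ω, MeasurableSet[m0] s →
      ∃ u : Set Ω, MeasurableSet[⨆ n, F (n + 1)] u ∧ μ (symmDiff s u) = 0)
    (a : ℕ → ℝ) (ha0 : a 0 = 0) (hamono : StrictMono a)
    (halim : Tendsto a atTop (𝓝 (1 : ℝ)))
    (f : Ω → ℝ) (hf : MemLp f 2 μ)
    (Tf : ℝ → Ω → ℝ) (hTf : ∀ t : ℝ, 0 < t → IsTt μ F a t 2 f (Tf t)) :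
    Tendsto (fun t : ℝ => eLpNorm (fun ω => Tf t ω - f ω) 2 μ) (𝓝[>] 0) (𝓝 0) := by
  classical
  -- coefficients facts
  have ha_mem : ∀ n, 0 ≤ a n ∧ a n < 1 := by
    intro n
    constructor
    · rw [← ha0]; exact hamono.monotone (Nat.zero_le n)
    · have h1 : a (n + 1) ≤ 1 := hamono.monotone.ge_of_tendsto halim (n + 1)
      exact lt_of_lt_of_le (hamono (Nat.lt_succ_self n)) h1
  -- the Hilbert space set-up
  set g : Lp ℝ 2 μ := hf.toLp f with hgdef
  set V : ℕ → Submodule ℝ (Lp ℝ 2 μ) := fun n => lpMeas ℝ ℝ (F (n + 1)) 2 μ with hVdef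
  haveI hVcs : ∀ n, CompleteSpace (V n) := fun n => by
    haveI : Fact (F (n + 1) ≤ m0) := ⟨hle (n + 1)⟩
    exact (inferInstance : CompleteSpace (lpMeas ℝ ℝ (F (n + 1)) 2 μ))
  haveI hVproj : ∀ n, (V n).HasOrthogonalProjection := fun n =>
    @Submodule.HasOrthogonalProjection.ofCompleteSpace ℝ _ _ _ _ (V n) (hVcs n)
  have hVmono : Monotone V := by
    intro n m hnm x hx
    rw [hVdef, mem_lpMeas_iff_aestronglyMeasurable] at hx ⊢
    exact hx.mono (hmono (Nat.succ_le_succ hnm))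
  set Q : ℕ → Lp ℝ 2 μ := fun n => (condExpL2 ℝ ℝ (hle (n + 1)) g : Lp ℝ 2 μ) with hQdef
  have hQproj : ∀ n, Q n = ((V n).orthogonalProjectionOnto g : Lp ℝ 2 μ) := fun n => rfl
  have hQtend : Tendsto Q atTop (𝓝 g) := by
    have := Submodule.starProjection_tendsto_self V hVmono g
      (by rw [aux_dense μ F hle hmono hgen])
    simpa [Submodule.starProjection_apply, ← hQproj] using this
  set pQ : ℕ → Lp ℝ 2 μ := fun n => if n = 0 then 0 else Q (n - 1) with hpQdef
  set D : ℕ → Lp ℝ 2 μ := fun n => Q n - pQ n with hDdef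
  have hsumD : ∀ N, ∑ n ∈ Finset.range N, D n = pQ N := by
    intro N
    induction N with
    | zero => simp [hpQdef]
    | succ N ih =>
        rw [Finset.sum_range_succ, ih, hDdef]
        simp only [hpQdef, Nat.succ_ne_zero, if_false, Nat.add_sub_cancel]
        by_cases hN : N = 0 <;> simp [hN]
  -- identification with condE / dE
  have hQcoe : ∀ n, ⇑(Q n) =ᵐ[μ] condE μ F f (n + 1) := by
    intro n
    have h1 := aux_condexpL2_ae_eq (hle (n + 1)) g
    have h2 : μ[⇑g | F (n + 1)] =ᵐ[μ] μ[f | F (n + 1)] := condExp_congr_ae hf.coeFn_toLp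
    simpa [condE] using h1.trans h2
  have hpQcoe : ∀ n, ⇑(pQ n) =ᵐ[μ] condE μ F f n := by
    intro n
    cases n with
    | zero =>
      simp only [hpQdef, if_pos rfl, condE]
      simpa using Lp.coeFn_zero ℝ 2 μ
    | succ k =>
      simp only [hpQdef, Nat.succ_ne_zero, if_false, Nat.add_sub_cancel]
      exact hQcoe k
  have hDcoe : ∀ n, ⇑(D n) =ᵐ[μ] dE μ F f (n + 1) := by
    intro n
    have h1 := Lp.coeFn_sub (Q n) (pQ n)
    filter_upwards [h1, hQcoe n, hpQcoe n] with ω hω h2 h3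
    rw [hDdef]
    simp only [dE, Nat.add_sub_cancel]
    rw [hω, Pi.sub_apply, h2, h3]
  -- membership and orthogonality
  have hDV : ∀ n, D n ∈ V n := by
    intro n
    refine sub_mem ?_ ?_
    · rw [hQproj n]; exact SetLike.coe_mem _
    · cases n with
      | zero => simp only [hpQdef, if_pos rfl]; exact zero_mem _
      | succ k =>
        simp only [hpQdef, Nat.succ_ne_zero, if_false, Nat.add_sub_cancel]
        have hQk : Q k ∈ V k := by rw [hQproj]; exact SetLike.coe_mem _
        exact hVmono (Nat.le_succ k) hQk
  have horth : ∀ i j, i < j → ⟪D j, D i⟫ = 0 := by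
    intro i j hij
    obtain ⟨k, rfl⟩ : ∃ k, j = k + 1 := ⟨j - 1, by omega⟩
    have hDj : D (k + 1) = (g - ((V k).orthogonalProjectionOnto g : Lp ℝ 2 μ))
        - (g - ((V (k + 1)).orthogonalProjectionOnto g : Lp ℝ 2 μ)) := by
      rw [hDdef]
      simp only [hpQdef, Nat.succ_ne_zero, if_false, Nat.add_sub_cancel]
      rw [← hQproj, ← hQproj]
      abel
    have hDiVk : D i ∈ V k := hVmono (by omega : i ≤ k) (hDV i)
    rw [hDj, inner_sub_left, ← Submodule.starProjection_apply, ← Submodule.starProjection_apply]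
    rw [Submodule.starProjection_inner_eq_zero g (D i) hDiVk,
      Submodule.starProjection_inner_eq_zero g (D i) (hVmono (by omega : k ≤ k + 1) hDiVk)]
    ring
  have hDorth : ∀ i j, i ≠ j → ⟪D i, D j⟫ = 0 := by
    intro i j hij
    rcases lt_or_gt_of_ne hij with h | h
    · rw [real_inner_comm]; exact horth i j h
    · exact horth j i h
  -- the main ε-argument
  rw [ENNReal.tendsto_nhds_zero]
  intro ε hε
  -- reduce to a real-valued ε
  obtain ⟨ε', hε'pos, hε'le⟩ : ∃ ε' : ℝ, 0 < ε' ∧ ENNReal.ofReal ε' ≤ ε := by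
    rcases eq_top_or_lt_top ε with h | h
    · exact ⟨1, one_pos, by simp [h]⟩
    · refine ⟨(min 1 ε).toReal, ?_, ?_⟩
      · rw [ENNReal.toReal_pos_iff]
        exact ⟨lt_min one_pos hε, lt_of_le_of_lt (min_le_right _ _) h⟩
      · rw [ENNReal.ofReal_toReal (by simp [ne_top_of_lt h])]
        exact min_le_right _ _
  set δ : ℝ := ε' / 10 with hδdef
  have hδpos : 0 < δ := by positivity
  -- step 1 : N₁
  obtain ⟨N₁, hN₁⟩ : ∃ N₁, ∀ n ≥ N₁, ‖Q n - g‖ ≤ δ := by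
    have := (Metric.tendsto_atTop.mp hQtend) δ hδpos
    obtain ⟨N₁, h⟩ := this
    exact ⟨N₁, fun n hn => le_of_lt (by simpa [dist_eq_norm] using h n hn)⟩
  set M : ℕ := N₁ + 1 with hMdef
  -- step 2 : eventual smallness of coefficients
  have hbt : ∀ᶠ t in 𝓝[>] (0:ℝ),
      (0 < t ∧ ∀ n ∈ Finset.range M, (1 - (1 - a n) ^ t) * ‖D n‖ ≤ δ / M) := by
    refine Filter.Eventually.and self_mem_nhdsWithin ?_
    rw [Filter.eventually_all_finset]
    intro n _
    have hpos : (0:ℝ) < 1 - a n := by linarith [(ha_mem n).2]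
    have htend : Tendsto (fun t : ℝ => (1 - a n) ^ t) (𝓝[>] 0) (𝓝 1) := by
      have h1 : Tendsto (fun t : ℝ => Real.exp (Real.log (1 - a n) * t)) (𝓝 0) (𝓝 1) := by
        have h2 : Tendsto (fun t : ℝ => Real.log (1 - a n) * t) (𝓝 0) (𝓝 0) := by
          simpa using (tendsto_id (x := 𝓝 (0:ℝ))).const_mul (Real.log (1 - a n))
        simpa [Function.comp_def] using (Real.continuous_exp.tendsto 0).comp h2
      have h3 : (fun t : ℝ => (1 - a n) ^ t) = fun t => Real.exp (Real.log (1 - a n) * t) := by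
        funext t; rw [Real.rpow_def_of_pos hpos]
      rw [h3]
      exact h1.mono_left nhdsWithin_le_nhds
    have htend2 : Tendsto (fun t : ℝ => (1 - (1 - a n) ^ t) * ‖D n‖) (𝓝[>] 0) (𝓝 0) := by
      have := ((tendsto_const_nhds (x := (1:ℝ))).sub htend).mul_const ‖D n‖
      simpa using this
    exact htend2.eventually_le_const (by positivity)
  -- step 3 : the main estimate for each admissible t
  filter_upwards [hbt] with t htpair
  obtain ⟨ht0, htco⟩ := htpair
  set bt : ℕ → ℝ := fun n => (1 - a n) ^ t with hbtdef
  have hbt01 : ∀ n, 0 ≤ bt n ∧ bt n ≤ 1 := by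
    intro n
    have hpos : (0:ℝ) < 1 - a n := by linarith [(ha_mem n).2]
    exact ⟨Real.rpow_nonneg hpos.le t,
      Real.rpow_le_one hpos.le (by linarith [(ha_mem n).1]) ht0.le⟩
  set P : ℕ → Lp ℝ 2 μ := fun N => ∑ n ∈ Finset.range N, bt n • D n with hPdef
  have hPcoe : ∀ N, ⇑(P N) =ᵐ[μ]
      fun ω => ∑ n ∈ Finset.range N, (1 - a n) ^ t * dE μ F f (n + 1) ω := by
    intro N
    induction N with
    | zero => simpa [hPdef, Pi.zero_def] using Lp.coeFn_zero ℝ 2 μ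
    | succ N ih =>
      simp only [hPdef]
      rw [Finset.sum_range_succ]
      filter_upwards [Lp.coeFn_add (∑ n ∈ Finset.range N, bt n • D n) (bt N • D N),
        Lp.coeFn_smul (bt N) (D N), ih, hDcoe N] with ω h1 h2 h3 h4
      rw [h1, Pi.add_apply, h3, h2, Pi.smul_apply, Finset.sum_range_succ, h4, smul_eq_mul]
  have hPest : ∀ N, M ≤ N → N₁ + 1 ≤ N → ‖P N - g‖ ≤ 4 * δ := by
    intro N hMN hN₁N
    have hsplit : P N - g = (∑ n ∈ Finset.range N, (bt n - 1) • D n) + (pQ N - g) := by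
      have h0 : P N - pQ N = ∑ n ∈ Finset.range N, (bt n - 1) • D n := by
        rw [hPdef]
        conv_lhs => rw [← hsumD N]
        rw [← Finset.sum_sub_distrib]
        refine Finset.sum_congr rfl fun n _ => ?_
        rw [sub_smul, one_smul]
      rw [← h0]; abel
    have hpQN : ‖pQ N - g‖ ≤ δ := by
      have h0 : pQ N = Q (N - 1) := by
        rw [hpQdef]; simp only [if_neg (by omega : ¬ N = 0)]
      rw [h0]; exact hN₁ (N - 1) (by omega)
    have habs : ∀ n, |bt n - 1| ≤ 1 := fun n => by
      rcases hbt01 n with ⟨h0, h1⟩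
      rw [abs_le]; constructor <;> linarith
    have hterm : ‖∑ n ∈ Finset.range N, (bt n - 1) • D n‖ ≤ 3 * δ := by
      have hsum2 : ∑ n ∈ Finset.range M, (bt n - 1) • D n
          + ∑ n ∈ Finset.Ico M N, (bt n - 1) • D n
          = ∑ n ∈ Finset.range N, (bt n - 1) • D n :=
        Finset.sum_range_add_sum_Ico _ hMN
      rw [← hsum2]
      refine (norm_add_le _ _).trans ?_
      have h1 : ‖∑ n ∈ Finset.range M, (bt n - 1) • D n‖ ≤ δ := by
        refine (norm_sum_le _ _).trans ?_
        have hle' : ∀ n ∈ Finset.range M, ‖(bt n - 1) • D n‖ ≤ δ / M := by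
          intro n hn
          rw [norm_smul, Real.norm_eq_abs]
          have habs' : |bt n - 1| = 1 - bt n := by
            rw [abs_of_nonpos (by linarith [(hbt01 n).2])]; ring
          rw [habs']
          exact htco n hn
        refine (Finset.sum_le_sum hle').trans ?_
        rw [Finset.sum_const, Finset.card_range, nsmul_eq_mul]
        have hM0 : (0:ℝ) < (M:ℝ) := by
          have : 0 < M := by omega
          exact_mod_cast this
        rw [mul_div_cancel₀ δ (ne_of_gt hM0)]
      have h2 : ‖∑ n ∈ Finset.Ico M N, (bt n - 1) • D n‖ ≤ 2 * δ := by
        refine (aux_parseval D hDorth (fun n => bt n - 1) habs (Finset.Ico M N)).trans ?_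
        have hIco : ∑ n ∈ Finset.Ico M N, D n = pQ N - pQ M := by
          have h3 := Finset.sum_range_add_sum_Ico D hMN
          rw [hsumD, hsumD] at h3
          exact eq_sub_of_add_eq' h3
        rw [hIco]
        have hpQM : ‖pQ M - g‖ ≤ δ := by
          have h0 : pQ M = Q N₁ := by rw [hpQdef]; simp [hMdef]
          rw [h0]; exact hN₁ N₁ le_rfl
        calc ‖pQ N - pQ M‖ = ‖(pQ N - g) - (pQ M - g)‖ := by abel_nf
        _ ≤ ‖pQ N - g‖ + ‖pQ M - g‖ := norm_sub_le _ _
        _ ≤ δ + δ := add_le_add hpQN hpQM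
        _ = 2 * δ := by ring
      linarith
    calc ‖P N - g‖ = ‖(∑ n ∈ Finset.range N, (bt n - 1) • D n) + (pQ N - g)‖ := by
          rw [hsplit]
    _ ≤ ‖∑ n ∈ Finset.range N, (bt n - 1) • D n‖ + ‖pQ N - g‖ := norm_add_le _ _
    _ ≤ 3 * δ + δ := add_le_add hterm hpQN
    _ = 4 * δ := by ring
  set S : ℕ → Ω → ℝ :=
    fun N ω => ∑ n ∈ Finset.range N, (1 - a n) ^ t * dE μ F f (n + 1) ω with hSdef
  have hSest : ∀ N, M ≤ N → N₁ + 1 ≤ N →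
      eLpNorm (fun ω => S N ω - f ω) 2 μ ≤ ENNReal.ofReal (4 * δ) := by
    intro N h1 h2
    have hae : (fun ω => S N ω - f ω) =ᵐ[μ] ⇑(P N - g) := by
      filter_upwards [Lp.coeFn_sub (P N) g, hPcoe N, hf.coeFn_toLp] with ω ha hb hc
      rw [ha, Pi.sub_apply, hb, hc]
    rw [eLpNorm_congr_ae hae,
      ENNReal.le_ofReal_iff_toReal_le (Lp.eLpNorm_ne_top _) (by positivity), ← Lp.norm_def]
    exact hPest N h1 h2
  have hconv := hTf t ht0
  rw [IsTt] at hconv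
  have hJconv : Tendsto (fun N => (eLpNorm (fun ω => S N ω - Tf t ω) 2 μ) ^ 2)
      atTop (𝓝 0) := by
    simpa using (ENNReal.Tendsto.pow (n := 2) hconv)
  obtain ⟨N, hN1, hN2⟩ : ∃ N, (M ≤ N ∧ N₁ + 1 ≤ N) ∧
      (eLpNorm (fun ω => S N ω - Tf t ω) 2 μ) ^ 2 ≤ ENNReal.ofReal (δ ^ 2) := by
    have h1 : ∀ᶠ N in atTop, M ≤ N ∧ N₁ + 1 ≤ N :=
      (eventually_ge_atTop M).and (eventually_ge_atTop (N₁ + 1))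
    have h2 := ENNReal.tendsto_nhds_zero.mp hJconv (ENNReal.ofReal (δ ^ 2))
      (ENNReal.ofReal_pos.mpr (by positivity))
    exact (h1.and h2).exists
  have hmain : (∫⁻ ω, (‖Tf t ω - f ω‖₊ : ℝ≥0∞) ^ 2 ∂μ) ≤ ENNReal.ofReal (68 * δ ^ 2) := by
    have hpt : ∀ ω, (‖Tf t ω - f ω‖₊ : ℝ≥0∞) ^ 2
        ≤ 4 * (‖S N ω - f ω‖₊ : ℝ≥0∞) ^ 2 + 4 * (‖Tf t ω - S N ω‖₊ : ℝ≥0∞) ^ 2 := by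
      intro ω
      have hdecomp : Tf t ω - f ω = (S N ω - f ω) + (Tf t ω - S N ω) := by ring
      calc (‖Tf t ω - f ω‖₊ : ℝ≥0∞) ^ 2
          ≤ ((‖S N ω - f ω‖₊ : ℝ≥0∞) + (‖Tf t ω - S N ω‖₊ : ℝ≥0∞)) ^ 2 := by
            gcongr
            rw [hdecomp]
            exact_mod_cast nnnorm_add_le _ _
      _ ≤ _ := aux_sq_add _ _
    refine le_trans (lintegral_mono hpt) ?_
    have hSmeas : AEStronglyMeasurable (S N) μ :=
      (Lp.aestronglyMeasurable (P N)).congr (hPcoe N)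
    have hmeas : AEMeasurable (fun ω => 4 * (‖S N ω - f ω‖₊ : ℝ≥0∞) ^ 2) μ :=
      (((hSmeas.sub hf.aestronglyMeasurable).enorm).pow_const 2).const_mul 4
    rw [lintegral_add_left' hmeas, lintegral_const_mul' 4 _ (by norm_num),
      lintegral_const_mul' 4 _ (by norm_num)]
    have hA : ∫⁻ ω, (‖S N ω - f ω‖₊ : ℝ≥0∞) ^ 2 ∂μ ≤ ENNReal.ofReal ((4 * δ) ^ 2) := by
      rw [aux_J_eq]
      calc (eLpNorm (fun ω => S N ω - f ω) 2 μ) ^ 2 ≤ (ENNReal.ofReal (4 * δ)) ^ 2 := by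
            gcongr
            exact hSest N hN1.1 hN1.2
      _ = ENNReal.ofReal ((4 * δ) ^ 2) := by rw [← ENNReal.ofReal_pow (by positivity)]
    have hB : ∫⁻ ω, (‖Tf t ω - S N ω‖₊ : ℝ≥0∞) ^ 2 ∂μ ≤ ENNReal.ofReal (δ ^ 2) := by
      have hrev : (fun ω => (‖Tf t ω - S N ω‖₊ : ℝ≥0∞) ^ 2)
          = fun ω => (‖S N ω - Tf t ω‖₊ : ℝ≥0∞) ^ 2 := by
        funext ω; rw [← nnnorm_neg (Tf t ω - S N ω), neg_sub]
      rw [hrev, aux_J_eq]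
      exact hN2
    calc 4 * (∫⁻ ω, (‖S N ω - f ω‖₊ : ℝ≥0∞) ^ 2 ∂μ)
          + 4 * (∫⁻ ω, (‖Tf t ω - S N ω‖₊ : ℝ≥0∞) ^ 2 ∂μ)
        ≤ 4 * ENNReal.ofReal ((4 * δ) ^ 2) + 4 * ENNReal.ofReal (δ ^ 2) := by gcongr
    _ = ENNReal.ofReal (68 * δ ^ 2) := by
        rw [show (4:ℝ≥0∞) = ENNReal.ofReal 4 from by norm_num,
          ← ENNReal.ofReal_mul (by norm_num), ← ENNReal.ofReal_mul (by norm_num),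
          ← ENNReal.ofReal_add (by positivity) (by positivity)]
        congr 1; ring
  have hfinal : eLpNorm (fun ω => Tf t ω - f ω) 2 μ ≤ ENNReal.ofReal ε' := by
    have hsq : (eLpNorm (fun ω => Tf t ω - f ω) 2 μ) ^ 2 ≤ ENNReal.ofReal (ε' ^ 2) := by
      rw [← aux_J_eq]
      refine hmain.trans (ENNReal.ofReal_le_ofReal ?_)
      rw [hδdef]; nlinarith
    calc eLpNorm (fun ω => Tf t ω - f ω) 2 μ
        = ((eLpNorm (fun ω => Tf t ω - f ω) 2 μ) ^ (2:ℕ)) ^ ((1:ℝ)/2) := by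
          rw [← ENNReal.rpow_natCast _ 2, ← ENNReal.rpow_mul]; norm_num
    _ ≤ (ENNReal.ofReal (ε' ^ 2)) ^ ((1:ℝ)/2) := ENNReal.rpow_le_rpow hsq (by norm_num)
    _ = ENNReal.ofReal ε' := by
        rw [ENNReal.ofReal_rpow_of_nonneg (by positivity) (by norm_num)]
        congr 1
        rw [← Real.rpow_natCast ε' 2, ← Real.rpow_mul hε'pos.le]
        norm_num
  exact hfinal.trans hε'le
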